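/- Let x* < x** be consecutive zeros of f with r positive on (x*, x**), and let β be the unique zero of f' in (x*, x**). If r is increasing on (x*, x**), then the Sturm-type bounds give x* < x** − π/√(r(x**)); if r is decreasing, then x* + π/√(r(x*)) < x**. -/

import Mathlib

open Set Real Filter Topology

lemma sturm_key (r f : ℝ → ℝ) (xs xss M : ℝ) (hlt : xs < xss) (hM : 0 < M)
    (hf1 : Differentiable ℝ f) (hf2 : Differentiable ℝ (deriv f))
    (hode : ∀ t ∈ Set.Icc xs xss, deriv (deriv f) t + r t * f t = 0)
    (hzs : f xs = 0) (hzss : f xss = 0)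
    (hfpos : ∀ t ∈ Set.Ioo xs xss, 0 < f t)
    (hrM : ∀ t ∈ Set.Ioo xs xss, r t < M) :
    Real.pi / Real.sqrt M < xss - xs := by
  set s := Real.sqrt M with hs_def
  have hs : 0 < s := Real.sqrt_pos.mpr hM
  have hs2 : s * s = M := Real.mul_self_sqrt hM.le
  by_contra hcon
  push_neg at hcon
  have harg : s * (xss - xs) ≤ Real.pi := by
    have := (le_div_iff₀ hs).mp hcon
    linarith [this]
  set W : ℝ → ℝ := fun t => f t * (s * Real.cos (s * (t - xs))) -
      deriv f t * Real.sin (s * (t - xs)) with hW_def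
  have hlin : ∀ t : ℝ, HasDerivAt (fun t => s * (t - xs)) s t := by
    intro t
    simpa using ((hasDerivAt_id t).sub_const xs).const_mul s
  have hg : ∀ t : ℝ, HasDerivAt (fun t => Real.sin (s * (t - xs)))
      (Real.cos (s * (t - xs)) * s) t := fun t =>
    (Real.hasDerivAt_sin _).comp t (hlin t)
  have hgc : ∀ t : ℝ, HasDerivAt (fun t => s * Real.cos (s * (t - xs)))
      ((-Real.sin (s * (t - xs)) * s) * s) t := fun t =>
    (((Real.hasDerivAt_cos _).comp t (hlin t)).const_mul s).congr_deriv (by ring)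
  have hW : ∀ t : ℝ, HasDerivAt W
      (f t * (-(s * s) * Real.sin (s * (t - xs))) -
        deriv (deriv f) t * Real.sin (s * (t - xs))) t := by
    intro t
    have h1 := ((hf1 t).hasDerivAt.mul (hgc t))
    have h2 := ((hf2 t).hasDerivAt.mul (hg t))
    have := h1.sub h2
    exact this.congr_deriv (by ring)
  have hWcont : Continuous W := by
    have : Continuous fun t : ℝ => s * (t - xs) := by continuity
    exact (hf1.continuous.mul (continuous_const.mul (Real.continuous_cos.comp this))).sub
      (hf2.continuous.mul (Real.continuous_sin.comp this))
  have hWanti : StrictAntiOn W (Icc xs xss) := by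
    apply strictAntiOn_of_deriv_neg (convex_Icc _ _) hWcont.continuousOn
    intro t ht
    rw [interior_Icc] at ht
    rw [(hW t).deriv]
    have hodet := hode t (Ioo_subset_Icc_self ht)
    have hfft : deriv (deriv f) t = -(r t * f t) := by linarith
    have hsin : 0 < Real.sin (s * (t - xs)) := by
      apply Real.sin_pos_of_pos_of_lt_pi
      · have : 0 < t - xs := by linarith [ht.1]
        positivity
      · have h1 : s * (t - xs) < s * (xss - xs) := by
          apply mul_lt_mul_of_pos_left _ hs
          linarith [ht.2]
        linarith
    rw [hfft]
    have hexp : f t * (-(s * s) * Real.sin (s * (t - xs))) -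
        -(r t * f t) * Real.sin (s * (t - xs)) =
        (r t - M) * (f t * Real.sin (s * (t - xs))) := by
      rw [hs2]; ring
    rw [hexp]
    exact mul_neg_of_neg_of_pos (by linarith [hrM t ht])
      (mul_pos (hfpos t ht) hsin)
  have hWxs : W xs = 0 := by
    simp [hW_def, hzs]
  have hWxss : W xss = -(deriv f xss * Real.sin (s * (xss - xs))) := by
    simp [hW_def, hzss]
  have hdxss : deriv f xss ≤ 0 := by
    have hd : HasDerivAt f (deriv f xss) xss := (hf1 xss).hasDerivAt
    have htend := hasDerivAt_iff_tendsto_slope.mp hd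
    have htend' : Tendsto (slope f xss) (𝓝[<] xss) (𝓝 (deriv f xss)) :=
      htend.mono_left (nhdsWithin_mono _ (fun x hx => ne_of_lt hx))
    refine le_of_tendsto htend' ?_
    filter_upwards [Ioo_mem_nhdsLT_of_mem (⟨hlt, le_refl xss⟩ : xss ∈ Ioc xs xss)] with t ht
    have hslope : slope f xss t = f t / (t - xss) := by
      rw [slope_def_field, hzss]; ring_nf
    rw [hslope]
    exact div_nonpos_of_nonneg_of_nonpos (hfpos t ht).le (by linarith [ht.2])
  have hsin_nonneg : 0 ≤ Real.sin (s * (xss - xs)) := by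
    apply Real.sin_nonneg_of_nonneg_of_le_pi _ harg
    have : 0 < xss - xs := by linarith
    positivity
  have hWxss_nonneg : 0 ≤ W xss := by
    rw [hWxss]
    have := mul_nonpos_of_nonpos_of_nonneg hdxss hsin_nonneg
    linarith
  have := hWanti (left_mem_Icc.mpr hlt.le) (right_mem_Icc.mpr hlt.le) hlt
  rw [hWxs] at this
  linarith

lemma sturm_key2 (r f : ℝ → ℝ) (xs xss M : ℝ) (hlt : xs < xss) (hM : 0 < M)
    (hf1 : Differentiable ℝ f) (hf2 : Differentiable ℝ (deriv f))
    (hode : ∀ t ∈ Set.Icc xs xss, deriv (deriv f) t + r t * f t = 0)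
    (hzs : f xs = 0) (hzss : f xss = 0)
    (hcons : ∀ t ∈ Set.Ioo xs xss, f t ≠ 0)
    (hrM : ∀ t ∈ Set.Ioo xs xss, r t < M) :
    Real.pi / Real.sqrt M < xss - xs := by
  have hmid : (xs + xss) / 2 ∈ Ioo xs xss := ⟨by linarith, by linarith⟩
  have hsign : (∀ t ∈ Ioo xs xss, 0 < f t) ∨ (∀ t ∈ Ioo xs xss, f t < 0) := by
    rcases lt_or_gt_of_ne (hcons _ hmid) with hneg | hpos
    · right
      intro t ht
      by_contra hge
      push_neg at hge
      have hgt : 0 < f t := lt_of_le_of_ne hge (Ne.symm (hcons t ht))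
      have hsub : Set.uIcc t ((xs + xss)/2) ⊆ Ioo xs xss :=
        Set.ordConnected_Ioo.uIcc_subset ht hmid
      have h0 : (0 : ℝ) ∈ Set.uIcc (f t) (f ((xs + xss)/2)) :=
        Set.mem_uIcc.mpr (Or.inr ⟨hneg.le, hgt.le⟩)
      obtain ⟨c, hc, hfc⟩ := intermediate_value_uIcc
        (hf1.continuous.continuousOn (s := Set.uIcc t ((xs + xss)/2))) h0
      exact hcons c (hsub hc) hfc
    · left
      intro t ht
      by_contra hle
      push_neg at hle
      have hltf : f t < 0 := lt_of_le_of_ne hle (hcons t ht)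
      have hsub : Set.uIcc t ((xs + xss)/2) ⊆ Ioo xs xss :=
        Set.ordConnected_Ioo.uIcc_subset ht hmid
      have h0 : (0 : ℝ) ∈ Set.uIcc (f t) (f ((xs + xss)/2)) :=
        Set.mem_uIcc.mpr (Or.inl ⟨hltf.le, hpos.le⟩)
      obtain ⟨c, hc, hfc⟩ := intermediate_value_uIcc
        (hf1.continuous.continuousOn (s := Set.uIcc t ((xs + xss)/2))) h0
      exact hcons c (hsub hc) hfc
  rcases hsign with hpos | hneg
  · exact sturm_key r f xs xss M hlt hM hf1 hf2 hode hzs hzss hpos hrM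
  · have hdneg : deriv (fun t => -f t) = fun t => -deriv f t := funext fun t => deriv.neg
    have hf1' : Differentiable ℝ (fun t => -f t) := hf1.neg
    have hf2' : Differentiable ℝ (deriv (fun t => -f t)) := by
      rw [hdneg]; exact hf2.neg
    have hode' : ∀ t ∈ Set.Icc xs xss,
        deriv (deriv (fun t => -f t)) t + r t * (-f t) = 0 := by
      intro t ht
      rw [hdneg]
      have : deriv (fun t => -deriv f t) t = -deriv (deriv f) t := deriv.neg
      rw [this]
      have := hode t ht
      linarith
    exact sturm_key r (fun t => -f t) xs xss M hlt hM hf1' hf2' hode'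
      (by simp [hzs]) (by simp [hzss]) (fun t ht => by simpa using (hneg t ht)) hrM

theorem zero_distance_bounds (r f : ℝ → ℝ) (xs xss β : ℝ) (hlt : xs < xss)
    (hr : ContDiff ℝ 1 r)
    (hrpos : ∀ t ∈ Set.Icc xs xss, 0 < r t)
    (hf1 : Differentiable ℝ f) (hf2 : Differentiable ℝ (deriv f))
    (hode : ∀ t ∈ Set.Icc xs xss, deriv (deriv f) t + r t * f t = 0)
    (hzs : f xs = 0) (hzss : f xss = 0)
    (hcons : ∀ t ∈ Set.Ioo xs xss, f t ≠ 0)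
    (hβ : β ∈ Set.Ioo xs xss) (hfβ : deriv f β = 0)
    (hβuniq : ∀ t ∈ Set.Ioo xs xss, deriv f t = 0 → t = β) :
    ((∀ t ∈ Set.Ioo xs xss, 0 < deriv r t) → xs < xss - Real.pi / Real.sqrt (r xss))
    ∧ ((∀ t ∈ Set.Ioo xs xss, deriv r t < 0) → xs + Real.pi / Real.sqrt (r xs) < xss) := by
  constructor
  · intro hinc
    have hmono : StrictMonoOn r (Set.Icc xs xss) := by
      apply strictMonoOn_of_deriv_pos (convex_Icc _ _) hr.continuous.continuousOn
      rw [interior_Icc]; exact hinc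
    have hM : 0 < r xss := hrpos xss (right_mem_Icc.mpr hlt.le)
    have hrM : ∀ t ∈ Set.Ioo xs xss, r t < r xss := fun t ht =>
      hmono (Ioo_subset_Icc_self ht) (right_mem_Icc.mpr hlt.le) ht.2
    have := sturm_key2 r f xs xss (r xss) hlt hM hf1 hf2 hode hzs hzss hcons hrM
    linarith
  · intro hdec
    have hanti : StrictAntiOn r (Set.Icc xs xss) := by
      apply strictAntiOn_of_deriv_neg (convex_Icc _ _) hr.continuous.continuousOn
      rw [interior_Icc]; exact hdec
    have hM : 0 < r xs := hrpos xs (left_mem_Icc.mpr hlt.le)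
    have hrM : ∀ t ∈ Set.Ioo xs xss, r t < r xs := fun t ht =>
      hanti (left_mem_Icc.mpr hlt.le) (Ioo_subset_Icc_self ht) ht.1
    have := sturm_key2 r f xs xss (r xs) hlt hM hf1 hf2 hode hzs hzss hcons hrM
    linarith
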